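/- For all real numbers k, γ, α, the determinant of the matrix Y(γ,α) satisfies det Y(γ,α) = (k+1)²·sin²(πγ) − (k−1)²·sin²(γ(α−π)). -/

import Mathlib

/-- The 4×4 matrix `Y(γ,α)` (with conductivity parameter `k`) encoding the
transmission conditions of the corner eigenvalue problem. -/
noncomputable def cornerMatrix (k γ α : ℝ) : Matrix (Fin 4) (Fin 4) ℝ :=
  !![1, 0, -Real.cos (2 * Real.pi * γ), -Real.sin (2 * Real.pi * γ);
     0, k, Real.sin (2 * Real.pi * γ), -Real.cos (2 * Real.pi * γ);
     Real.cos (γ * α), Real.sin (γ * α), -Real.cos (γ * α), -Real.sin (γ * α);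
     -(k * Real.sin (γ * α)), k * Real.cos (γ * α), Real.sin (γ * α), -Real.cos (γ * α)]

/-- `det Y(γ,α) = (k+1)²·sin²(πγ) − (k−1)²·sin²(γ(α−π))`. -/
theorem det_cornerMatrix (k γ α : ℝ) :
    (cornerMatrix k γ α).det =
      (k + 1) ^ 2 * Real.sin (Real.pi * γ) ^ 2
        - (k - 1) ^ 2 * Real.sin (γ * (α - Real.pi)) ^ 2 := by
  have e1 : 2 * Real.pi * γ = 2 * (Real.pi * γ) := by ring
  have e2 : γ * (α - Real.pi) = γ * α - Real.pi * γ := by ring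
  simp [cornerMatrix, Matrix.det_succ_row_zero, Fin.sum_univ_succ, Fin.succAbove,
    Fin.castSucc, Fin.castAdd, Fin.castLE]
  rw [e1, e2, Real.cos_two_mul, Real.sin_two_mul, Real.sin_sub]
  set c := Real.cos (γ * α)
  set s := Real.sin (γ * α)
  set p := Real.sin (Real.pi * γ)
  set q := Real.cos (Real.pi * γ)
  have h1 : s ^ 2 + c ^ 2 = 1 := Real.sin_sq_add_cos_sq _
  have h2 : p ^ 2 + q ^ 2 = 1 := Real.sin_sq_add_cos_sq _
  linear_combination (p^2 + k - 2*k*q^2 + k*q^4 + 2*k*p^2*q^2 + k*p^4 + k^2*p^2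
      + 3*k - 6*k*q^2 + 3*k*q^4 - 2*k*p^2 + 2*k*p^2*q^2 - k*p^4) * h1 +
    (-k + k*q^2 + k*p^2 - s^2 - 3*k + 3*k*q^2 - k*p^2 + 2*k*s^2 - k^2*s^2) * h2
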